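/- The union over all n ∈ ℕ and j ∈ ℤ of the curves γ_{n,j} = {(α, β) ∈ ℝ² : 4 − β² + α² − 4α·cos(2πj/2ⁿ) = 0} is dense in the region S = {(α, β) ∈ ℝ² : ||α| − |β|| ≤ 2 and |α| + |β| ≥ 2}. -/

import Mathlib

open Real Filter Topology

theorem stmt9 :
    {p : ℝ × ℝ | |(|p.1| - |p.2|)| ≤ 2 ∧ 2 ≤ |p.1| + |p.2|} ⊆
      closure (⋃ (n : ℕ) (j : ℤ),
        {p : ℝ × ℝ | 4 - p.2 ^ 2 + p.1 ^ 2 - 4 * p.1 * Real.cos (2 * Real.pi * j / 2 ^ n) = 0}) := by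
  rintro ⟨α, β⟩ ⟨h1, h2⟩
  simp only [Set.mem_setOf_eq] at h1 h2
  obtain ⟨h1a, h1b⟩ := abs_le.mp h1
  have hb0 : (0:ℝ) ≤ |β| := abs_nonneg β
  have ha0 : (0:ℝ) ≤ |α| := abs_nonneg α
  have hsa : |α|^2 = α^2 := sq_abs α
  have hsb : |β|^2 = β^2 := sq_abs β
  -- the parameter c₀
  set c₀ : ℝ := if α = 0 then 0 else (α^2 + 4 - β^2) / (4*α) with hc₀def
  have hc₀ : -1 ≤ c₀ ∧ c₀ ≤ 1 := by
    by_cases hα : α = 0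
    · simp [hc₀def, hα]
    · have h4α : (0:ℝ) < |4*α| := by
        simp [abs_mul]
        positivity
      have habs : |α^2 + 4 - β^2| ≤ |4*α| := by
        rw [abs_mul, show |(4:ℝ)| = 4 by norm_num, abs_le]
        constructor
        · nlinarith [mul_nonneg (by linarith : (0:ℝ) ≤ (|α|+2) - |β|)
            (by linarith : (0:ℝ) ≤ (|α|+2) + |β|), hsa, hsb]
        · nlinarith [mul_nonneg (by linarith : (0:ℝ) ≤ |β| - (|α| - 2))
            (by linarith : (0:ℝ) ≤ |β| - (2 - |α|)), hsa, hsb]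
      have : |c₀| ≤ 1 := by
        rw [hc₀def, if_neg hα, abs_div, div_le_one h4α]
        exact habs
      exact abs_le.mp this
  have hkey : 4 - β^2 + α^2 - 4*α*c₀ = 0 := by
    by_cases hα : α = 0
    · have hβ : |β| = 2 := by
        simp [hα] at h1a h2
        linarith
      have : β^2 = 4 := by nlinarith
      simp [hc₀def, hα]
      linarith
    · rw [hc₀def, if_neg hα]
      field_simp
      ring
  set θ : ℝ := Real.arccos c₀ with hθdef
  have hcθ : Real.cos θ = c₀ := Real.cos_arccos hc₀.1 hc₀.2
  -- dyadic approximation of θ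
  set j : ℕ → ℤ := fun n => ⌊2^n * θ / (2*Real.pi)⌋ with hjdef
  set θseq : ℕ → ℝ := fun n => 2 * Real.pi * (j n) / 2^n with hθseqdef
  have hπ : (0:ℝ) < 2*Real.pi := by positivity
  have hθtend : Tendsto θseq atTop (𝓝 θ) := by
    have h2n : ∀ n : ℕ, (0:ℝ) < 2^n := fun n => by positivity
    have hup : ∀ n, θseq n ≤ θ := by
      intro n
      have hf : (j n : ℝ) ≤ 2^n * θ / (2*Real.pi) := Int.floor_le _
      rw [le_div_iff₀ hπ] at hf
      show 2 * Real.pi * (j n) / 2^n ≤ θ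
      rw [div_le_iff₀ (h2n n)]
      nlinarith [hf]
    have hlow : ∀ n, θ - 2*Real.pi/2^n ≤ θseq n := by
      intro n
      have hf : 2^n * θ / (2*Real.pi) - 1 < (j n : ℝ) := Int.sub_one_lt_floor _
      rw [sub_lt_iff_lt_add, div_lt_iff₀ hπ] at hf
      show θ - 2*Real.pi/2^n ≤ 2 * Real.pi * (j n) / 2^n
      rw [sub_le_iff_le_add, ← add_div, le_div_iff₀ (h2n n)]
      nlinarith [hf]
    have hzero : Tendsto (fun n : ℕ => 2*Real.pi/2^n) atTop (𝓝 0) := by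
      have h2 : Tendsto (fun n : ℕ => (2:ℝ)^n) atTop atTop :=
        tendsto_pow_atTop_atTop_of_one_lt (by norm_num)
      have := h2.inv_tendsto_atTop.const_mul (2*Real.pi)
      simpa [div_eq_mul_inv] using this
    have hlowt : Tendsto (fun n : ℕ => θ - 2*Real.pi/2^n) atTop (𝓝 θ) := by
      have := (tendsto_const_nhds (x := θ) (f := atTop (α := ℕ))).sub hzero
      simpa using this
    exact tendsto_of_tendsto_of_tendsto_of_le_of_le hlowt tendsto_const_nhds hlow hup
  -- the continuous map
  set s : ℝ := if 0 ≤ β then 1 else -1 with hsdef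
  have hs2 : s^2 = 1 := by rw [hsdef]; split <;> norm_num
  have hE : ∀ t : ℝ, 0 ≤ α^2 - 4*α*Real.cos t + 4 := by
    intro t
    nlinarith [Real.cos_le_one t, Real.neg_one_le_cos t, sq_nonneg (α - 2*Real.cos t),
      sq_nonneg (Real.cos t)]
  set F : ℝ → ℝ × ℝ := fun t => (α, s * Real.sqrt (α^2 - 4*α*Real.cos t + 4)) with hFdef
  have hFc : Continuous F := by
    have hc : Continuous fun t : ℝ => α^2 - 4*α*Real.cos t + 4 :=
      ((continuous_const.sub (continuous_const.mul Real.continuous_cos)).add continuous_const)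
    exact continuous_const.prodMk (continuous_const.mul hc.sqrt)
  have hFθ : F θ = (α, β) := by
    rw [hFdef]
    refine Prod.ext rfl ?_
    show s * Real.sqrt (α^2 - 4*α*Real.cos θ + 4) = β
    rw [hcθ]
    have : α^2 - 4*α*c₀ + 4 = β^2 := by linarith
    rw [this, Real.sqrt_sq_eq_abs]
    rw [hsdef]
    split
    · rw [one_mul, abs_of_nonneg (by assumption)]
    · rw [abs_of_neg (by linarith [lt_of_not_ge (by assumption : ¬ 0 ≤ β)])]
      ring
  refine mem_closure_of_tendsto (f := fun n => F (θseq n)) (b := (atTop : Filter ℕ)) ?_ ?_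
  · rw [← hFθ]
    exact (hFc.tendsto θ).comp hθtend
  · filter_upwards with n
    refine Set.mem_iUnion.mpr ⟨n, Set.mem_iUnion.mpr ⟨j n, ?_⟩⟩
    show 4 - (s * Real.sqrt (α^2 - 4*α*Real.cos (θseq n) + 4))^2 + α^2
        - 4*α*Real.cos (2 * Real.pi * (j n) / 2^n) = 0
    have hsq : (s * Real.sqrt (α^2 - 4*α*Real.cos (θseq n) + 4))^2
        = α^2 - 4*α*Real.cos (θseq n) + 4 := by
      rw [mul_pow, hs2, one_mul, Real.sq_sqrt (hE _)]
    rw [hsq]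
    have : (2 * Real.pi * (j n) / 2^n : ℝ) = θseq n := rfl
    rw [this]
    ring
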